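/- For probability measures P, Q on a common space, the total variation distance satisfies Pinsker's inequality: d_TV(P, Q) ≤ sqrt(0.5 · d_KL(P, Q)), where d_KL is the Kullback–Leibler divergence. -/

import Mathlib

open MeasureTheory
open scoped ENNReal

/-- Total variation distance: sup over measurable sets of |P(A) − Q(A)|. -/
noncomputable def tvDist {α : Type*} [MeasurableSpace α] (P Q : Measure α) : ℝ :=
  ⨆ A : {A : Set α // MeasurableSet A}, |(P A).toReal - (Q A).toReal|

open Classical in
/-- Kullback–Leibler divergence, `∞` when `P` is not absolutely continuous
w.r.t. `Q` (or the log-likelihood ratio is not integrable). -/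
noncomputable def klDiv {α : Type*} [MeasurableSpace α] (P Q : Measure α) : ℝ≥0∞ :=
  if P ≪ Q ∧ Integrable (llr P Q) P then ENNReal.ofReal (∫ x, llr P Q x ∂P) else ⊤

open Real

private lemma pinskerF_deriv {t : ℝ} (ht : 0 < t) :
    HasDerivAt (fun t : ℝ => (t+1) * Real.log t - 2*(t-1))
      (Real.log t + (t+1) * t⁻¹ - 2) t := by
  have h1 : HasDerivAt (fun t : ℝ => (t+1) * Real.log t)
      (1 * Real.log t + (t+1) * t⁻¹) t :=
    (((hasDerivAt_id t).add_const 1)).mul (Real.hasDerivAt_log ht.ne')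
  have h2 : HasDerivAt (fun t : ℝ => 2*(t-1)) 2 t := by
    simpa using ((hasDerivAt_id t).sub_const 1).const_mul 2
  exact (h1.sub h2).congr_deriv (by ring)

private lemma pinskerF_mono : MonotoneOn (fun t : ℝ => (t+1) * Real.log t - 2*(t-1)) (Set.Ioi 0) := by
  apply monotoneOn_of_deriv_nonneg (convex_Ioi 0)
  · apply ContinuousOn.sub
    · exact (continuousOn_id.add continuousOn_const).mul
        (Real.continuousOn_log.mono (by intro x hx; exact ne_of_gt hx))
    · fun_prop
  · intro x hx
    rw [interior_Ioi] at hx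
    exact (pinskerF_deriv hx).differentiableAt.differentiableWithinAt
  · intro x hx
    rw [interior_Ioi] at hx
    rw [(pinskerF_deriv hx).deriv]
    have := Real.one_sub_inv_le_log_of_pos hx
    have hx' : (x+1) * x⁻¹ = 1 + x⁻¹ := by
      rw [add_mul, mul_inv_cancel₀ (ne_of_gt (Set.mem_Ioi.1 hx)), one_mul]
    nlinarith [this]

private lemma pinskerF_nonneg {t : ℝ} (ht : 1 ≤ t) : 0 ≤ (t+1) * Real.log t - 2*(t-1) := by
  have := pinskerF_mono (Set.mem_Ioi.2 one_pos) (Set.mem_Ioi.2 (lt_of_lt_of_le one_pos ht)) ht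
  simpa using this

private lemma pinskerF_nonpos {t : ℝ} (ht0 : 0 < t) (ht : t ≤ 1) :
    (t+1) * Real.log t - 2*(t-1) ≤ 0 := by
  have := pinskerF_mono (Set.mem_Ioi.2 ht0) (Set.mem_Ioi.2 one_pos) ht
  simpa using this

private lemma pinskerH_deriv {t : ℝ} (ht : 0 < t) :
    HasDerivAt (fun t : ℝ => (2*t+4) * (t * Real.log t - t + 1) - 3*(t-1)^2)
      (4 * ((t+1) * Real.log t - 2*(t-1))) t := by
  have hlog : HasDerivAt (fun t : ℝ => t * Real.log t) (Real.log t + 1) t := by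
    have := (hasDerivAt_id t).mul (Real.hasDerivAt_log ht.ne')
    exact this.congr_deriv (by simp [mul_inv_cancel₀ ht.ne'])
  have h1 : HasDerivAt (fun t : ℝ => t * Real.log t - t + 1) (Real.log t + 1 - 1) t :=
    (hlog.sub (hasDerivAt_id t)).add_const 1
  have h2 : HasDerivAt (fun t : ℝ => 2*t+4) 2 t := by
    simpa using ((hasDerivAt_id t).const_mul 2).add_const 4
  have h3 : HasDerivAt (fun t : ℝ => (2*t+4) * (t * Real.log t - t + 1))
      (2 * (t * Real.log t - t + 1) + (2*t+4) * (Real.log t + 1 - 1)) t := h2.mul h1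
  have h4 : HasDerivAt (fun t : ℝ => 3*(t-1)^2) (3*(2*(t-1))) t := by
    simpa using (((hasDerivAt_id t).sub_const 1).pow 2).const_mul 3
  have := h3.sub h4
  exact this.congr_deriv (by ring)

/-- The key pointwise inequality: `3(t-1)² ≤ (2t+4)·(t log t − t + 1)` for `t ≥ 0`. -/
lemma pinsker_pointwise {t : ℝ} (ht : 0 ≤ t) :
    3*(t-1)^2 ≤ (2*t+4) * (t * Real.log t - t + 1) := by
  set H : ℝ → ℝ := fun t => (2*t+4) * (t * Real.log t - t + 1) - 3*(t-1)^2 with hH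
  have hH1 : H 1 = 0 := by simp [hH]
  have hcont : Continuous H := by
    apply Continuous.sub
    · exact (by fun_prop : Continuous fun t : ℝ => 2*t+4).mul
        ((Real.continuous_mul_log.sub continuous_id).add continuous_const)
    · fun_prop
  have key : 0 ≤ H t := by
    rcases le_or_gt t 1 with h1 | h1
    · have anti : AntitoneOn H (Set.Icc 0 1) := by
        apply antitoneOn_of_deriv_nonpos (convex_Icc 0 1) hcont.continuousOn
        · intro x hx
          rw [interior_Icc] at hx
          exact (pinskerH_deriv hx.1).differentiableAt.differentiableWithinAt
        · intro x hx
          rw [interior_Icc] at hx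
          rw [(pinskerH_deriv hx.1).deriv]
          have := pinskerF_nonpos hx.1 hx.2.le
          linarith
      have := anti (Set.mem_Icc.2 ⟨ht, h1⟩) (Set.mem_Icc.2 ⟨zero_le_one, le_refl 1⟩) h1
      rw [hH1] at this; exact this
    · have mono : MonotoneOn H (Set.Ici 1) := by
        apply monotoneOn_of_deriv_nonneg (convex_Ici 1) hcont.continuousOn
        · intro x hx
          rw [interior_Ici] at hx
          exact (pinskerH_deriv (lt_trans one_pos hx)).differentiableAt.differentiableWithinAt
        · intro x hx
          rw [interior_Ici] at hx
          rw [(pinskerH_deriv (lt_trans one_pos hx)).deriv]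
          have := pinskerF_nonneg hx.le
          linarith
      have := mono (Set.mem_Ici.2 (le_refl 1)) (Set.mem_Ici.2 h1.le) h1.le
      rw [hH1] at this; exact this
  simpa [hH] using key


/-- Pinsker's inequality: `d_TV(P,Q) ≤ √(0.5 · d_KL(P,Q))`. -/
theorem pinsker_tv_le_sqrt_kl {α : Type*} [MeasurableSpace α]
    (P Q : Measure α) [IsProbabilityMeasure P] [IsProbabilityMeasure Q] :
    ENNReal.ofReal (tvDist P Q) ≤ ((1/2 : ℝ≥0∞) * klDiv P Q) ^ (1/2 : ℝ) := by
  by_cases hc : P ≪ Q ∧ Integrable (llr P Q) P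
  swap
  · rw [klDiv, if_neg hc, ENNReal.mul_top (by norm_num), ENNReal.top_rpow_of_pos (by norm_num)]
    exact le_top
  obtain ⟨hPQ, hint⟩ := hc
  set g : α → ℝ := fun x => (P.rnDeriv Q x).toReal with hg
  have hgmeas : Measurable g := (Measure.measurable_rnDeriv P Q).ennreal_toReal
  have hgint : Integrable g Q := Measure.integrable_toReal_rnDeriv
  have hgnn : ∀ x, 0 ≤ g x := fun x => ENNReal.toReal_nonneg
  have hgint1 : ∫ x, g x ∂Q = 1 := by
    rw [hg, Measure.integral_toReal_rnDeriv hPQ]; simp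
  have hglog : Integrable (fun x => g x * Real.log (g x)) Q := by
    have := (MeasureTheory.integrable_rnDeriv_smul_iff hPQ).2 hint
    simpa [llr, smul_eq_mul, hg] using this
  have hKL : ∫ x, llr P Q x ∂P = ∫ x, g x * Real.log (g x) ∂Q := by
    rw [← MeasureTheory.integral_rnDeriv_smul hPQ]
    simp [llr, smul_eq_mul, hg]
  set K : ℝ := ∫ x, llr P Q x ∂P with hK
  have hsubint : Integrable (fun x => g x * Real.log (g x) - g x) Q := hglog.sub hgint
  have hphiint : Integrable (fun x => g x * Real.log (g x) - g x + 1) Q :=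
    hsubint.add (integrable_const 1)
  have hphinn : ∀ x, 0 ≤ g x * Real.log (g x) - g x + 1 := by
    intro x
    nlinarith [pinsker_pointwise (hgnn x), hgnn x, sq_nonneg (g x - 1)]
  have hphiK : ∫ x, (g x * Real.log (g x) - g x + 1) ∂Q = K := by
    rw [integral_add hsubint (integrable_const 1), integral_sub hglog hgint, hgint1]
    have h1Q : ∫ (_ : α), (1:ℝ) ∂Q = 1 := by simp
    rw [h1Q]
    linarith [hKL]
  -- the two Hölder factors
  set a : α → ℝ≥0∞ := fun x => ENNReal.ofReal ((2*g x+4)/3) ^ ((1:ℝ)/2) with ha_def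
  set b : α → ℝ≥0∞ := fun x => ENNReal.ofReal (3*(g x-1)^2/(2*g x+4)) ^ ((1:ℝ)/2) with hb_def
  have hameas : Measurable a := by
    apply Measurable.pow_const
    exact (((hgmeas.const_mul 2).add_const 4).div_const 3).ennreal_ofReal
  have hbmeas : Measurable b := by
    apply Measurable.pow_const
    apply Measurable.ennreal_ofReal
    exact (((hgmeas.sub measurable_const).pow_const 2).const_mul 3).div
      ((hgmeas.const_mul 2).add_const 4)
  have h24 : ∀ x, (0:ℝ) < 2 * g x + 4 := by intro x; nlinarith [hgnn x]
  have hab : ∀ x, a x * b x = ENNReal.ofReal |g x - 1| := by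
    intro x
    rw [ha_def, hb_def]
    rw [← ENNReal.mul_rpow_of_nonneg _ _ (by norm_num : (0:ℝ) ≤ 1/2),
      ← ENNReal.ofReal_mul (by positivity)]
    have h1 : (2*g x+4)/3 * (3*(g x-1)^2/(2*g x+4)) = |g x - 1|^2 := by
      rw [sq_abs]; rw [div_mul_div_comm, div_eq_iff (mul_pos three_pos (h24 x)).ne']; ring
    rw [h1, ENNReal.ofReal_pow (abs_nonneg _), ← ENNReal.rpow_natCast, ← ENNReal.rpow_mul]
    norm_num
  have ha2 : ∫⁻ x, a x ^ (2:ℝ) ∂Q = ENNReal.ofReal 2 := by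
    have h1 : ∀ x, a x ^ (2:ℝ) = ENNReal.ofReal ((2*g x+4)/3) := by
      intro x; rw [ha_def, ← ENNReal.rpow_mul]; norm_num
    simp_rw [h1]
    have hconst2 : Integrable (fun x => 2 * g x) Q := hgint.const_mul 2
    have h24int : Integrable (fun x => 2 * g x + 4) Q := hconst2.add (integrable_const 4)
    have h243int : Integrable (fun x => (2 * g x + 4) / 3) Q := h24int.div_const 3
    rw [← ofReal_integral_eq_lintegral_ofReal h243int
      (Filter.Eventually.of_forall fun x => by have := hgnn x; positivity)]
    congr 1
    rw [integral_div, integral_add hconst2 (integrable_const 4),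
      integral_const_mul, hgint1, integral_const]
    simp
    norm_num
  have hb2 : ∫⁻ x, b x ^ (2:ℝ) ∂Q ≤ ENNReal.ofReal K := by
    have h1 : ∀ x, b x ^ (2:ℝ) = ENNReal.ofReal (3*(g x-1)^2/(2*g x+4)) := by
      intro x; rw [hb_def, ← ENNReal.rpow_mul]; norm_num
    simp_rw [h1]
    calc ∫⁻ x, ENNReal.ofReal (3*(g x-1)^2/(2*g x+4)) ∂Q
        ≤ ∫⁻ x, ENNReal.ofReal (g x * Real.log (g x) - g x + 1) ∂Q := by
          apply lintegral_mono
          intro x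
          apply ENNReal.ofReal_le_ofReal
          rw [div_le_iff₀ (h24 x)]
          have := pinsker_pointwise (hgnn x)
          linarith
      _ = ENNReal.ofReal (∫ x, (g x * Real.log (g x) - g x + 1) ∂Q) :=
          (ofReal_integral_eq_lintegral_ofReal hphiint
            (Filter.Eventually.of_forall hphinn)).symm
      _ = ENNReal.ofReal K := by rw [hphiK]
  have hconj : Real.HolderConjugate 2 2 := by
    rw [Real.holderConjugate_iff]; constructor <;> norm_num
  have holder := ENNReal.lintegral_mul_le_Lp_mul_Lq Q hconj hameas.aemeasurable hbmeas.aemeasurable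
  have habs : Integrable (fun x => |g x - 1|) Q := (hgint.sub (integrable_const 1)).abs
  have hlin : ∫⁻ x, (a * b) x ∂Q = ENNReal.ofReal (∫ x, |g x - 1| ∂Q) := by
    simp_rw [Pi.mul_apply, hab]
    rw [← ofReal_integral_eq_lintegral_ofReal habs
      (Filter.Eventually.of_forall fun x => abs_nonneg _)]
  have hmain : ENNReal.ofReal (∫ x, |g x - 1| ∂Q)
      ≤ (ENNReal.ofReal 2) ^ ((1:ℝ)/2) * (ENNReal.ofReal K) ^ ((1:ℝ)/2) := by
    rw [← hlin]
    refine holder.trans ?_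
    rw [ha2]
    exact mul_le_mul_right (ENNReal.rpow_le_rpow hb2 (by norm_num)) _
  -- TV bound
  have hNE : Nonempty {A : Set α // MeasurableSet A} := ⟨⟨∅, MeasurableSet.empty⟩⟩
  have htv : tvDist P Q ≤ (∫ x, |g x - 1| ∂Q) / 2 := by
    apply ciSup_le
    rintro ⟨A, hA⟩
    simp only
    have hsub : Integrable (fun x => g x - 1) Q := hgint.sub (integrable_const 1)
    have hI1 : (P A).toReal - (Q A).toReal = ∫ x in A, (g x - 1) ∂Q := by
      rw [integral_sub hgint.integrableOn (integrable_const 1).integrableOn,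
        Measure.setIntegral_toReal_rnDeriv hPQ A, setIntegral_const]
      simp; rfl
    have hI2 : (Q Aᶜ).toReal - (P Aᶜ).toReal = ∫ x in Aᶜ, (1 - g x) ∂Q := by
      rw [integral_sub (integrable_const 1).integrableOn hgint.integrableOn,
        Measure.setIntegral_toReal_rnDeriv hPQ Aᶜ, setIntegral_const]
      simp; rfl
    have hcompl : (P A).toReal - (Q A).toReal = (Q Aᶜ).toReal - (P Aᶜ).toReal := by
      have hP : (P A).toReal + (P Aᶜ).toReal = 1 := by
        rw [← ENNReal.toReal_add (measure_ne_top _ _) (measure_ne_top _ _),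
          measure_add_measure_compl hA]
        simp
      have hQ : (Q A).toReal + (Q Aᶜ).toReal = 1 := by
        rw [← ENNReal.toReal_add (measure_ne_top _ _) (measure_ne_top _ _),
          measure_add_measure_compl hA]
        simp
      linarith
    have hb1 : |(P A).toReal - (Q A).toReal| ≤ ∫ x in A, |g x - 1| ∂Q := by
      rw [hI1]
      simpa [Real.norm_eq_abs] using
        norm_integral_le_integral_norm (μ := Q.restrict A) (fun x => g x - 1)
    have hb2' : |(P A).toReal - (Q A).toReal| ≤ ∫ x in Aᶜ, |g x - 1| ∂Q := by
      rw [hcompl, hI2]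
      have h1 := norm_integral_le_integral_norm (μ := Q.restrict Aᶜ) (fun x => 1 - g x)
      simp only [Real.norm_eq_abs] at h1
      refine h1.trans (le_of_eq ?_)
      congr 1
      ext x
      rw [abs_sub_comm]
    have hsplit : ∫ x, |g x - 1| ∂Q = (∫ x in A, |g x - 1| ∂Q) + ∫ x in Aᶜ, |g x - 1| ∂Q :=
      (integral_add_compl hA habs).symm
    linarith
  calc ENNReal.ofReal (tvDist P Q) ≤ ENNReal.ofReal ((∫ x, |g x - 1| ∂Q) / 2) :=
        ENNReal.ofReal_le_ofReal htv
    _ = ENNReal.ofReal (∫ x, |g x - 1| ∂Q) / 2 := by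
        rw [ENNReal.ofReal_div_of_pos (by norm_num)]
        norm_num
    _ ≤ (ENNReal.ofReal 2) ^ ((1:ℝ)/2) * (ENNReal.ofReal K) ^ ((1:ℝ)/2) / 2 := by
        exact ENNReal.div_le_div_right hmain 2
    _ = ((1/2 : ℝ≥0∞) * klDiv P Q) ^ ((1:ℝ)/2) := by
        rw [klDiv, if_pos ⟨hPQ, hint⟩, ← hK]
        rw [ENNReal.mul_rpow_of_nonneg _ _ (by norm_num : (0:ℝ) ≤ 1/2)]
        have h2 : (ENNReal.ofReal 2) = (2:ℝ≥0∞) := by norm_num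
        rw [h2]
        rw [div_eq_mul_inv, mul_right_comm]
        congr 1
        have h12 : (1/2 : ℝ≥0∞) = 2⁻¹ := by norm_num
        rw [h12, ENNReal.inv_rpow, ← ENNReal.rpow_neg,
          ← ENNReal.rpow_neg_one 2, ← ENNReal.rpow_add _ _ (by norm_num) (by norm_num)]
        congr 1
        norm_num
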